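/- For every tuple x ∈ A^{m^{2^n}+1}, the value f(x) occurs among the coordinates of x. Consequently, f is compatible with every unary relation X ⊆ A, i.e., f maps X^{m^{2^n}+1} into X for every X ⊆ A. -/

import Mathlib

/- The universe `A = {a, 0, 1, ..., n}` of size `n+2` is encoded as `Fin (n+2)`,
where `a` is encoded as `0` and the element `i ∈ {0, ..., n}` is encoded as `i+1`. -/

/-- `L_r(x)`: the number of coordinates of `x` whose value is strictly less than
the element `r` in the order `a < 0 < 1 < ⋯ < n` (encoded: value `< r + 1`);
for `r = n+1` this counts all coordinates. -/
def Lcnt (n : ℕ) {K : ℕ} (x : Fin K → Fin (n + 2)) (r : ℕ) : ℕ :=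
  (Finset.univ.filter (fun q => (x q).val < r + 1)).card

/-- `F_x = {r ∈ {0, …, n} : L_{r+1}(x) > m^(2^r) · L_r(x)}`. -/
def FsetA (n m : ℕ) {K : ℕ} (x : Fin K → Fin (n + 2)) : Finset ℕ :=
  (Finset.range (n + 1)).filter (fun r => m ^ 2 ^ r * Lcnt n x r < Lcnt n x (r + 1))

/-- The operation `f : A^(m^(2^n)+1) → A`: `f(x) = max F_x` if `F_x ≠ ∅` (the
element `max F_x`, encoded as `max F_x + 1`), and `f(x) = a` otherwise. -/
def fop (n m : ℕ) (x : Fin (m ^ 2 ^ n + 1) → Fin (n + 2)) : Fin (n + 2) :=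
  if h : (FsetA n m x).Nonempty then
    ⟨(FsetA n m x).max' h + 1, by
      have hmem := (FsetA n m x).max'_mem h
      have h2 : (FsetA n m x).max' h < n + 1 :=
        Finset.mem_range.mp (Finset.mem_filter.mp hmem).1
      omega⟩
  else 0

/-- The value `f(x)` occurs among the coordinates of `x`; consequently `f` is
compatible with every unary relation `X ⊆ A`. -/
theorem stmt10 (n m : ℕ) (hm : 2 ≤ m) :
    (∀ x : Fin (m ^ 2 ^ n + 1) → Fin (n + 2), ∃ q, x q = fop n m x) ∧
    (∀ X : Set (Fin (n + 2)), ∀ x : Fin (m ^ 2 ^ n + 1) → Fin (n + 2),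
      (∀ q, x q ∈ X) → fop n m x ∈ X) := by
  have main : ∀ x : Fin (m ^ 2 ^ n + 1) → Fin (n + 2), ∃ q, x q = fop n m x := by
    intro x
    unfold fop
    split_ifs with h
    · set r := (FsetA n m x).max' h with hr
      have hmem := (FsetA n m x).max'_mem h
      simp only [FsetA, Finset.mem_filter, Finset.mem_range] at hmem
      obtain ⟨hrn, hlt⟩ := hmem
      have hle : Lcnt n x r ≤ m ^ 2 ^ r * Lcnt n x r :=
        Nat.le_mul_of_pos_left _ (Nat.pow_pos (by omega))
      have hLL : Lcnt n x r < Lcnt n x (r + 1) := lt_of_le_of_lt hle hlt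
      by_contra hc
      push_neg at hc
      have hle2 : Lcnt n x (r + 1) ≤ Lcnt n x r := by
        apply Finset.card_le_card
        intro q hq
        simp only [Lcnt, Finset.mem_filter, Finset.mem_univ, true_and] at hq ⊢
        have hne : (x q).val ≠ r + 1 := by
          intro heq
          exact hc q (Fin.ext heq)
        omega
      omega
    · have hall : ∀ r, r ≤ n → Lcnt n x (r + 1) ≤ m ^ 2 ^ r * Lcnt n x r := by
        intro r hrn
        by_contra hc
        push_neg at hc
        exact h ⟨r, by
          simp only [FsetA, Finset.mem_filter, Finset.mem_range]
          exact ⟨by omega, hc⟩⟩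
      have h0 : 0 < Lcnt n x 0 := by
        by_contra h0
        push_neg at h0
        have hz : Lcnt n x 0 = 0 := by omega
        have hzz : ∀ r, r ≤ n + 1 → Lcnt n x r = 0 := by
          intro r hrle
          induction r with
          | zero => exact hz
          | succ k ih =>
            have h1 := hall k (by omega)
            rw [ih (by omega), Nat.mul_zero] at h1
            omega
        have hK : Lcnt n x (n + 1) = m ^ 2 ^ n + 1 := by
          have hu : (Finset.univ.filter (fun q : Fin (m ^ 2 ^ n + 1) =>
              (x q).val < n + 1 + 1)) = Finset.univ :=
            Finset.filter_true_of_mem (fun q _ => (x q).is_lt)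
          rw [Lcnt, hu, Finset.card_univ, Fintype.card_fin]
        have := hzz (n + 1) le_rfl
        omega
      obtain ⟨q, hq⟩ := Finset.card_pos.mp h0
      simp only [Lcnt, Finset.mem_filter, Finset.mem_univ, true_and] at hq
      exact ⟨q, Fin.ext (by rw [Fin.val_zero]; omega)⟩
  refine ⟨main, fun X x hx => ?_⟩
  obtain ⟨q, hq⟩ := main x
  rw [← hq]
  exact hx q
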